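/- SU(n) has commutator length at most two: every T ∈ SU(n) can be written as a product of two commutators, i.e., there exist a, b, c, d ∈ SU(n) such that T = (aba⁻¹b⁻¹)(cdc⁻¹d⁻¹). -/

import Mathlib

open Matrix Complex Polynomial in
lemma exists_good_lambda {n : ℕ} (T : Matrix (Fin n) (Fin n) ℂ) :
    ∃ l : ℂ, ‖l‖ = 1 ∧ (l • (1 : Matrix (Fin n) (Fin n) ℂ) + T).det ≠ 0 := by
  set p : Polynomial ℂ := (-T).charpoly with hp
  have hp0 : p ≠ 0 := (Matrix.charpoly_monic _).ne_zero
  have hfin := Polynomial.finite_setOf_isRoot hp0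
  have heval : ∀ z : ℂ, p.eval z = (z • (1 : Matrix (Fin n) (Fin n) ℂ) + T).det := by
    intro z
    rw [hp, Matrix.charpoly, ← Polynomial.coe_evalRingHom, RingHom.map_det]
    congr 1
    ext i j
    by_cases h : i = j
    · subst h
      simp [Matrix.charmatrix_apply_eq, Matrix.one_apply, Matrix.smul_apply]
    · simp [Matrix.charmatrix_apply_ne _ _ _ h, Matrix.one_apply, h, Matrix.smul_apply]
  have hinj : Set.InjOn (fun t : ℝ => Complex.exp (t * I)) (Set.Ioo 0 1) := by
    intro a ha b hb hab
    simp only at hab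
    rw [Complex.exp_eq_exp_iff_exists_int] at hab
    obtain ⟨k, hk⟩ := hab
    have h2 : (a : ℂ) = b + k * (2 * Real.pi) := by
      linear_combination (-I) * hk + ((a : ℂ) - b - k * (2 * Real.pi)) * Complex.I_sq
    have h3 : a = b + k * (2 * Real.pi) := by
      have := congrArg Complex.re h2
      simpa using this
    have hk0 : k = 0 := by
      rcases lt_trichotomy k 0 with h | h | h
      · have hk1 : (k : ℝ) ≤ -1 := by exact_mod_cast (by omega : k ≤ -1)
        nlinarith [Real.pi_gt_three, ha.1, ha.2, hb.1, hb.2,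
          mul_le_mul_of_nonneg_right hk1 (by positivity : (0:ℝ) ≤ 2 * Real.pi)]
      · exact h
      · have hk1 : (1 : ℝ) ≤ k := by exact_mod_cast h
        nlinarith [Real.pi_gt_three, ha.1, ha.2, hb.1, hb.2,
          mul_le_mul_of_nonneg_right hk1 (by positivity : (0:ℝ) ≤ 2 * Real.pi)]
    simpa [hk0] using h3
  have hinf : (Set.Ioo (0:ℝ) 1).Infinite := Set.Ioo_infinite (by norm_num)
  have himg := (hinf.image hinj).diff hfin
  obtain ⟨z, hz, hz2⟩ := himg.nonempty
  obtain ⟨t, -, rfl⟩ := hz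
  refine ⟨Complex.exp (t * I), ?_, ?_⟩
  · exact Complex.norm_exp_ofReal_mul_I t
  · intro h
    exact hz2 (by simpa [Polynomial.IsRoot, heval] using h)

open Matrix Complex in
lemma mat_cancel {n : ℕ} {X Y A B : Matrix (Fin n) (Fin n) ℂ}
    (hX : IsUnit X.det) (hY : IsUnit Y.det) (h : X * A * Y = X * B * Y) : A = B := by
  have h1 : X⁻¹ * (X * A * Y) * Y⁻¹ = X⁻¹ * (X * B * Y) * Y⁻¹ := by rw [h]
  rw [show X⁻¹ * (X * A * Y) * Y⁻¹ = X⁻¹ * X * A * (Y * Y⁻¹) by noncomm_ring,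
      show X⁻¹ * (X * B * Y) * Y⁻¹ = X⁻¹ * X * B * (Y * Y⁻¹) by noncomm_ring,
      Matrix.nonsing_inv_mul _ hX, Matrix.mul_nonsing_inv _ hY] at h1
  simpa using h1

open Matrix Complex in
lemma unitary_diag {n : ℕ} (T : Matrix (Fin n) (Fin n) ℂ)
    (hT : T ∈ Matrix.unitaryGroup (Fin n) ℂ)
    (hl : ∃ l : ℂ, ‖l‖ = 1 ∧ (l • (1 : Matrix (Fin n) (Fin n) ℂ) + T).det ≠ 0) :
    ∃ U ∈ Matrix.unitaryGroup (Fin n) ℂ, ∃ e : Fin n → ℂ,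
      T = U * Matrix.diagonal e * star U := by
  obtain ⟨l, hl1, hl2⟩ := hl
  have hl0 : l ≠ 0 := by intro h; rw [h] at hl1; simp at hl1
  set S : Matrix (Fin n) (Fin n) ℂ := l⁻¹ • T with hSdef
  have hc2 : l * star l = 1 := by
    rw [show (star l) = (starRingEnd ℂ) l from rfl, Complex.mul_conj]
    norm_cast
    rw [Complex.normSq_eq_norm_sq, hl1]; norm_num
  have hc1 : star l * l = 1 := by rw [mul_comm]; exact hc2
  have hTT : star T * T = 1 := Matrix.mem_unitaryGroup_iff'.mp hT
  have hTT' : T * star T = 1 := Matrix.mem_unitaryGroup_iff.mp hT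
  have hSS : star S * S = 1 := by
    rw [hSdef, star_smul, Matrix.smul_mul, Matrix.mul_smul, smul_smul, hTT,
      star_inv₀, ← mul_inv, hc1, inv_one, one_smul]
  have hSS' : S * star S = 1 := by
    rw [hSdef, star_smul, Matrix.smul_mul, Matrix.mul_smul, smul_smul, hTT',
      star_inv₀, ← mul_inv, hc2, inv_one, one_smul]
  have honeS : (1 : Matrix (Fin n) (Fin n) ℂ) + S = l⁻¹ • (l • 1 + T) := by
    rw [smul_add, smul_smul, inv_mul_cancel₀ hl0, one_smul]
  have hdet1S : IsUnit ((1 : Matrix (Fin n) (Fin n) ℂ) + S).det := by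
    rw [honeS, Matrix.det_smul]
    exact (IsUnit.pow _ (isUnit_iff_ne_zero.mpr (inv_ne_zero hl0))).mul
      (isUnit_iff_ne_zero.mpr hl2)
  have hdet1S' : IsUnit ((1 : Matrix (Fin n) (Fin n) ℂ) + star S).det := by
    have : (1 : Matrix (Fin n) (Fin n) ℂ) + star S = (1 + S)ᴴ := by
      rw [Matrix.conjTranspose_add, Matrix.conjTranspose_one, Matrix.star_eq_conjTranspose]
    rw [this, Matrix.det_conjTranspose, isUnit_iff_ne_zero]
    simp only [star_ne_zero]
    exact isUnit_iff_ne_zero.mp hdet1S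
  set H : Matrix (Fin n) (Fin n) ℂ := Complex.I • ((1 - S) * (1 + S)⁻¹) with hHdef
  have hH : H.IsHermitian := by
    show Hᴴ = H
    refine mat_cancel hdet1S' hdet1S ?_
    have hstar : Hᴴ = (-Complex.I) • ((1 + star S)⁻¹ * (1 - star S)) := by
      rw [hHdef, Matrix.conjTranspose_smul, Matrix.conjTranspose_mul,
        Matrix.conjTranspose_nonsing_inv, Matrix.conjTranspose_add,
        Matrix.conjTranspose_sub, Matrix.conjTranspose_one,
        Matrix.star_eq_conjTranspose]
      congr 1
      simp [Complex.conj_I]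
    rw [hstar, hHdef]
    rw [Matrix.mul_smul, Matrix.smul_mul, Matrix.mul_smul, Matrix.smul_mul]
    rw [show (1 + star S) * ((1 + star S)⁻¹ * (1 - star S)) * (1 + S)
        = ((1 + star S) * (1 + star S)⁻¹) * ((1 - star S) * (1 + S)) by noncomm_ring]
    rw [show (1 + star S) * ((1 - S) * (1 + S)⁻¹) * (1 + S)
        = ((1 + star S) * (1 - S)) * ((1 + S)⁻¹ * (1 + S)) by noncomm_ring]
    rw [Matrix.mul_nonsing_inv _ hdet1S', Matrix.nonsing_inv_mul _ hdet1S,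
      one_mul, mul_one]
    have e1 : (1 - star S) * (1 + S) = S - star S := by
      have : (1 - star S) * (1 + S) = 1 + S - star S - star S * S := by noncomm_ring
      rw [this, hSS]; abel
    have e2 : (1 + star S) * (1 - S) = star S - S := by
      have : (1 + star S) * (1 - S) = 1 - S + star S - star S * S := by noncomm_ring
      rw [this, hSS]; abel
    rw [e1, e2, neg_smul, ← smul_neg, neg_sub]
  -- spectral theorem
  set U : Matrix (Fin n) (Fin n) ℂ := (hH.eigenvectorUnitary : Matrix (Fin n) (Fin n) ℂ)
    with hUdef
  have hU : U ∈ Matrix.unitaryGroup (Fin n) ℂ := hH.eigenvectorUnitary.2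
  have hUU : U * star U = 1 := Matrix.mem_unitaryGroup_iff.mp hU
  have hU'U : star U * U = 1 := Matrix.mem_unitaryGroup_iff'.mp hU
  set ev : Fin n → ℝ := hH.eigenvalues with hevdef
  have hspec : H = U * Matrix.diagonal (fun k => (ev k : ℂ)) * star U := by
    have := hH.spectral_theorem
    rw [Unitary.conjStarAlgAut_apply] at this
    exact this
  have hmulU : ∀ f g : Fin n → ℂ,
      (U * Matrix.diagonal f * star U) * (U * Matrix.diagonal g * star U)
        = U * Matrix.diagonal (fun k => f k * g k) * star U := by
    intro f g
    calc (U * Matrix.diagonal f * star U) * (U * Matrix.diagonal g * star U)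
        = U * Matrix.diagonal f * (star U * U) * Matrix.diagonal g * star U := by
          noncomm_ring
      _ = U * (Matrix.diagonal f * Matrix.diagonal g) * star U := by
          rw [hU'U]; noncomm_ring
      _ = U * Matrix.diagonal (fun k => f k * g k) * star U := by
          rw [Matrix.diagonal_mul_diagonal]
  have hconst : ∀ c : ℂ, c • (1 : Matrix (Fin n) (Fin n) ℂ)
      = U * Matrix.diagonal (fun _ => c) * star U := by
    intro c
    have : Matrix.diagonal (fun _ : Fin n => c) = c • (1 : Matrix (Fin n) (Fin n) ℂ) := by
      ext i j; by_cases h : i = j <;> simp [Matrix.diagonal_apply, h, Matrix.one_apply]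
    rw [this, mul_smul_comm, smul_mul_assoc, Matrix.mul_one, hUU]
  have hIH : Complex.I • (1 : Matrix (Fin n) (Fin n) ℂ) + H
      = U * Matrix.diagonal (fun k => Complex.I + (ev k : ℂ)) * star U := by
    rw [hspec, hconst Complex.I]
    rw [show Matrix.diagonal (fun k => Complex.I + (ev k : ℂ))
        = Matrix.diagonal (fun _ : Fin n => Complex.I) + Matrix.diagonal (fun k => (ev k : ℂ))
      from (Matrix.diagonal_add _ _).symm]
    noncomm_ring
  have hIH' : Complex.I • (1 : Matrix (Fin n) (Fin n) ℂ) - H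
      = U * Matrix.diagonal (fun k => Complex.I - (ev k : ℂ)) * star U := by
    rw [hspec, hconst Complex.I]
    rw [show Matrix.diagonal (fun k => Complex.I - (ev k : ℂ))
        = Matrix.diagonal (fun _ : Fin n => Complex.I) - Matrix.diagonal (fun k => (ev k : ℂ))
      from (Matrix.diagonal_sub _ _).symm]
    noncomm_ring
  have hne : ∀ k, Complex.I + (ev k : ℂ) ≠ 0 := by
    intro k h
    have := congrArg Complex.im h
    simp at this
  have hdetIH : IsUnit (Complex.I • (1 : Matrix (Fin n) (Fin n) ℂ) + H).det := by
    rw [hIH, Matrix.det_mul, Matrix.det_mul]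
    rw [show U.det * (Matrix.diagonal fun k => Complex.I + (ev k : ℂ)).det * (star U).det
      = (Matrix.diagonal fun k => Complex.I + (ev k : ℂ)).det * (U.det * (star U).det) by ring]
    rw [← Matrix.det_mul, hUU, Matrix.det_one, mul_one, Matrix.det_diagonal]
    exact isUnit_iff_ne_zero.mpr (Finset.prod_ne_zero_iff.mpr fun k _ => hne k)
  have hHmul : H * (1 + S) = Complex.I • ((1 : Matrix (Fin n) (Fin n) ℂ) - S) := by
    rw [hHdef, Matrix.smul_mul, Matrix.mul_assoc, Matrix.nonsing_inv_mul _ hdet1S,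
      Matrix.mul_one]
  have h2 : (Complex.I • (1 : Matrix (Fin n) (Fin n) ℂ) + H) * S
      = Complex.I • (1 : Matrix (Fin n) (Fin n) ℂ) - H := by
    have hexp : H + H * S = Complex.I • (1 : Matrix (Fin n) (Fin n) ℂ) - Complex.I • S := by
      rw [← smul_sub, ← hHmul]; noncomm_ring
    have hHS : H * S = Complex.I • (1 : Matrix (Fin n) (Fin n) ℂ) - Complex.I • S - H := by
      rw [← hexp]; abel
    rw [add_mul, Matrix.smul_mul, one_mul, hHS]; abel
  have h7 : (Complex.I • (1 : Matrix (Fin n) (Fin n) ℂ) + H)⁻¹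
      = U * Matrix.diagonal (fun k => (Complex.I + (ev k : ℂ))⁻¹) * star U := by
    apply Matrix.inv_eq_right_inv
    rw [hIH, hmulU]
    rw [show (fun k => (Complex.I + (ev k : ℂ)) * (Complex.I + (ev k : ℂ))⁻¹)
      = fun _ : Fin n => (1 : ℂ) from funext fun k => mul_inv_cancel₀ (hne k)]
    rw [← hconst 1, one_smul]
  have h5 : S = U * Matrix.diagonal
      (fun k => (Complex.I + (ev k : ℂ))⁻¹ * (Complex.I - (ev k : ℂ))) * star U := by
    have : S = (Complex.I • (1 : Matrix (Fin n) (Fin n) ℂ) + H)⁻¹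
        * (Complex.I • (1 : Matrix (Fin n) (Fin n) ℂ) - H) := by
      rw [← h2, ← Matrix.mul_assoc, Matrix.nonsing_inv_mul _ hdetIH, one_mul]
    rw [this, h7, hIH', hmulU]
  refine ⟨U, hU, fun k => l * ((Complex.I + (ev k : ℂ))⁻¹ * (Complex.I - (ev k : ℂ))), ?_⟩
  have hTS : T = l • S := by rw [hSdef, smul_smul, mul_inv_cancel₀ hl0, one_smul]
  rw [hTS, h5,
    show (fun k => l * ((Complex.I + (ev k : ℂ))⁻¹ * (Complex.I - (ev k : ℂ))))
      = l • fun k => (Complex.I + (ev k : ℂ))⁻¹ * (Complex.I - (ev k : ℂ)) from rfl,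
    Matrix.diagonal_smul, mul_smul_comm, smul_mul_assoc]

open Matrix Complex in
lemma diag_commutator {m : ℕ} (e : Fin (m+1) → ℂ)
    (hudiag : ∀ i, e i * star (e i) = 1) (hdet : ∏ i, e i = 1) :
    ∃ A B : Matrix (Fin (m+1)) (Fin (m+1)) ℂ,
      A ∈ Matrix.unitaryGroup (Fin (m+1)) ℂ ∧ B ∈ Matrix.unitaryGroup (Fin (m+1)) ℂ ∧
      Matrix.diagonal e = A * B * star A * star B := by
  set σ : Equiv.Perm (Fin (m+1)) := finRotate (m+1) with hσ
  set a : Fin (m+1) → ℂ := fun i => ∏ k ∈ Finset.Ici i, e k with ha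
  have hIci0 : Finset.Ici (0 : Fin (m+1)) = Finset.univ := by
    ext k; simp [Finset.mem_Ici, Fin.zero_le]
  have key : ∀ i, a i = e i * a (σ i) := by
    intro i
    by_cases hi : i = Fin.last m
    · subst hi
      rw [hσ, finRotate_succ_apply, Fin.last_add_one]
      have h1 : Finset.Ici (Fin.last m) = {Fin.last m} := by
        ext k; simp [Finset.mem_Ici, Fin.last_le_iff]
      rw [ha]
      simp only [h1, hIci0, Finset.prod_singleton, hdet, mul_one]
    · have hlt : i < Fin.last m := lt_of_le_of_ne (Fin.le_last i) hi
      rw [hσ, finRotate_succ_apply]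
      have hval : (i+1).val = i.val + 1 := Fin.val_add_one_of_lt hlt
      have hsplit : Finset.Ici i = insert i (Finset.Ici (i+1)) := by
        ext k
        simp only [Finset.mem_Ici, Finset.mem_insert, Fin.le_def, hval, Fin.ext_iff]
        omega
      have hnotmem : i ∉ Finset.Ici (i+1) := by
        simp only [Finset.mem_Ici, Fin.le_def, hval]
        omega
      rw [ha]
      simp only [hsplit, Finset.prod_insert hnotmem]
  set A : Matrix (Fin (m+1)) (Fin (m+1)) ℂ := Matrix.diagonal a with hA
  set B : Matrix (Fin (m+1)) (Fin (m+1)) ℂ := σ.permMatrix ℂ with hB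
  have hBapply : ∀ i j, B i j = if σ i = j then 1 else 0 := by
    intro i j
    rw [hB, Equiv.Perm.permMatrix, PEquiv.toMatrix_apply, Equiv.toPEquiv_apply]
    simp [Option.mem_def, eq_comm]
  have hcomm : A * B = Matrix.diagonal e * (B * A) := by
    ext i j
    rw [Matrix.diagonal_mul, Matrix.diagonal_mul, Matrix.mul_diagonal, hBapply]
    by_cases h : σ i = j
    · rw [if_pos h, mul_one, one_mul, ← h]
      exact key i
    · rw [if_neg h, mul_zero, zero_mul, mul_zero]
  have hastar : ∀ i, a i * star (a i) = 1 := by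
    intro i
    rw [ha]
    simp only [star_prod]
    rw [← Finset.prod_mul_distrib]
    exact Finset.prod_eq_one fun k _ => hudiag k
  have hAunit : A * star A = 1 := by
    rw [hA, Matrix.star_eq_conjTranspose, Matrix.diagonal_conjTranspose,
      Matrix.diagonal_mul_diagonal]
    rw [show (fun i => a i * star a i) = fun _ => (1:ℂ) from funext fun i => hastar i]
    exact Matrix.diagonal_one
  have hBstar : star B = (σ⁻¹).permMatrix ℂ := by
    ext i j
    rw [Matrix.star_eq_conjTranspose, Matrix.conjTranspose_apply, hBapply]
    rw [show (σ⁻¹).permMatrix ℂ i j = if σ⁻¹ i = j then 1 else 0 by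
      rw [Equiv.Perm.permMatrix, PEquiv.toMatrix_apply, Equiv.toPEquiv_apply]
      simp [Option.mem_def, eq_comm]]
    by_cases h : σ j = i
    · rw [if_pos h, if_pos (by rw [← h]; simp)]
      simp
    · rw [if_neg h, if_neg (by intro hc; exact h (by rw [← hc]; simp))]
      simp
  have hBunit : B * star B = 1 := by
    rw [hBstar, hB, Equiv.Perm.permMatrix, Equiv.Perm.permMatrix,
      ← PEquiv.toMatrix_trans, ← Equiv.toPEquiv_trans]
    rw [show σ.trans σ⁻¹ = Equiv.refl (Fin (m+1)) from Equiv.self_trans_symm σ]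
    rw [Equiv.toPEquiv_refl, PEquiv.toMatrix_refl]
  refine ⟨A, B, Matrix.mem_unitaryGroup_iff.mpr hAunit,
    Matrix.mem_unitaryGroup_iff.mpr hBunit, ?_⟩
  rw [hcomm]
  rw [show Matrix.diagonal e * (B * A) * star A * star B
      = Matrix.diagonal e * (B * (A * star A) * star B) by noncomm_ring]
  rw [hAunit, Matrix.mul_one, hBunit, Matrix.mul_one]

open Matrix Complex in
lemma scalar_fix {n : ℕ} (hn : 0 < n) (M : Matrix (Fin n) (Fin n) ℂ)
    (hM : M ∈ Matrix.unitaryGroup (Fin n) ℂ) :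
    ∃ z : ℂ, z • M ∈ Matrix.specialUnitaryGroup (Fin n) ℂ ∧ z * star z = 1 := by
  have hdet := Matrix.det_of_mem_unitary hM
  have h1 : star (M.det) * M.det = 1 := (Unitary.mem_iff.mp hdet).1
  have habs : ‖M.det‖ = 1 := by
    have h2 : Complex.normSq M.det = 1 := by
      have := h1
      rw [mul_comm, show (star M.det) = (starRingEnd ℂ) M.det from rfl,
        Complex.mul_conj] at this
      exact_mod_cast this
    have h3 : ‖M.det‖^2 = 1 := by rw [← Complex.normSq_eq_norm_sq, h2]
    nlinarith [norm_nonneg M.det]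
  have hdet0 : M.det ≠ 0 := by
    intro h; rw [h] at habs; simp at habs
  obtain ⟨z, hz⟩ := IsAlgClosed.exists_pow_nat_eq (M.det)⁻¹ hn
  have habsz : ‖z‖ = 1 := by
    have h4 : ‖z‖^n = 1 := by
      rw [← norm_pow, hz, norm_inv, habs]; norm_num
    rcases lt_trichotomy ‖z‖ 1 with h | h | h
    · exfalso
      have := pow_lt_one₀ (norm_nonneg z) h hn.ne'
      rw [h4] at this; exact lt_irrefl _ this
    · exact h
    · exfalso
      have := one_lt_pow₀ h hn.ne'
      rw [h4] at this; exact lt_irrefl _ this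
  have hzz : z * star z = 1 := by
    rw [show (star z) = (starRingEnd ℂ) z from rfl, Complex.mul_conj]
    rw [show Complex.normSq z = 1 by rw [Complex.normSq_eq_norm_sq, habsz]; norm_num]
    norm_num
  refine ⟨z, ?_, hzz⟩
  rw [Matrix.mem_specialUnitaryGroup_iff]
  constructor
  · rw [Matrix.mem_unitaryGroup_iff, star_smul, smul_mul_assoc, mul_smul_comm, smul_smul,
      Matrix.mem_unitaryGroup_iff.mp hM, hzz, one_smul]
  · rw [Matrix.det_smul, Fintype.card_fin, hz, inv_mul_cancel₀ hdet0]

open Matrix Complex in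
/-- `SU(n)` has commutator length at most two: every element is a product of
two commutators. -/
theorem su_commutator_length_two
    (n : ℕ)
    (T : Matrix (Fin n) (Fin n) ℂ)
    (hT : T ∈ Matrix.specialUnitaryGroup (Fin n) ℂ) :
    ∃ a b c d : Matrix (Fin n) (Fin n) ℂ,
      a ∈ Matrix.specialUnitaryGroup (Fin n) ℂ ∧
      b ∈ Matrix.specialUnitaryGroup (Fin n) ℂ ∧
      c ∈ Matrix.specialUnitaryGroup (Fin n) ℂ ∧
      d ∈ Matrix.specialUnitaryGroup (Fin n) ℂ ∧
      T = (a * b * a⁻¹ * b⁻¹) * (c * d * c⁻¹ * d⁻¹) := by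
  obtain ⟨hTu, hTdet⟩ := Matrix.mem_specialUnitaryGroup_iff.mp hT
  rcases Nat.eq_zero_or_pos n with hn | hn
  · subst hn
    exact ⟨1, 1, 1, 1, one_mem _, one_mem _, one_mem _, one_mem _,
      Subsingleton.elim _ _⟩
  obtain ⟨m, rfl⟩ : ∃ m, n = m + 1 := ⟨n - 1, by omega⟩
  obtain ⟨U, hU, e, hUe⟩ := unitary_diag T hTu (exists_good_lambda T)
  have hUU : U * star U = 1 := Matrix.mem_unitaryGroup_iff.mp hU
  have hU'U : star U * U = 1 := Matrix.mem_unitaryGroup_iff'.mp hU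
  set E : Matrix (Fin (m+1)) (Fin (m+1)) ℂ := Matrix.diagonal e with hEdef
  have hE : E = star U * T * U := by
    rw [hUe]
    symm
    calc star U * (U * E * star U) * U
        = (star U * U) * E * (star U * U) := by noncomm_ring
      _ = E := by rw [hU'U, Matrix.one_mul, Matrix.mul_one]
  have hEunitary : E ∈ Matrix.unitaryGroup (Fin (m+1)) ℂ := by
    rw [hE]
    exact mul_mem (mul_mem (Unitary.star_mem hU) hTu) hU
  have hEdet1 : E.det = 1 := by
    rw [hE, Matrix.det_mul, Matrix.det_mul]
    rw [show (star U).det * T.det * U.det = T.det * (U.det * (star U).det) by ring]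
    rw [← Matrix.det_mul, hUU, Matrix.det_one, mul_one, hTdet]
  have hEE : E * star E = 1 := Matrix.mem_unitaryGroup_iff.mp hEunitary
  have hei : ∀ i, e i * star (e i) = 1 := by
    intro i
    have h := congrFun (congrFun hEE i) i
    rw [hEdef, Matrix.star_eq_conjTranspose, Matrix.diagonal_conjTranspose,
      Matrix.diagonal_mul_diagonal] at h
    simpa [Matrix.diagonal_apply_eq, Matrix.one_apply] using h
  have hprod : ∏ i, e i = 1 := by
    rw [← Matrix.det_diagonal, ← hEdef]; exact hEdet1
  obtain ⟨A, B, hA, hB, hABcomm⟩ := diag_commutator e hei hprod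
  obtain ⟨μ, hμSU, hμ⟩ := scalar_fix hn A hA
  obtain ⟨ν, hνSU, hν⟩ := scalar_fix hn B hB
  obtain ⟨η, hηSU, hη⟩ := scalar_fix hn U hU
  set V : Matrix (Fin (m+1)) (Fin (m+1)) ℂ := η • U with hVdef
  set A1 : Matrix (Fin (m+1)) (Fin (m+1)) ℂ := μ • A with hA1def
  set B1 : Matrix (Fin (m+1)) (Fin (m+1)) ℂ := ν • B with hB1def
  have hVu : V ∈ Matrix.unitaryGroup (Fin (m+1)) ℂ := hηSU.1
  have hVV : V * star V = 1 := Matrix.mem_unitaryGroup_iff.mp hVu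
  have hV'V : star V * V = 1 := Matrix.mem_unitaryGroup_iff'.mp hVu
  -- T = V * E * star V
  have hTV : T = V * E * star V := by
    rw [hVdef, star_smul, smul_mul_assoc, smul_mul_assoc, mul_smul_comm, smul_smul,
      hη, one_smul]
    exact hUe
  have hconj : ∀ X Y : Matrix (Fin (m+1)) (Fin (m+1)) ℂ,
      (V * X * star V) * (V * Y * star V) = V * (X * Y) * star V := by
    intro X Y
    calc (V * X * star V) * (V * Y * star V)
        = V * X * (star V * V) * Y * star V := by noncomm_ring
      _ = V * (X * Y) * star V := by rw [hV'V]; noncomm_ring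
  have hstarconj : ∀ X : Matrix (Fin (m+1)) (Fin (m+1)) ℂ,
      star (V * X * star V) = V * star X * star V := by
    intro X
    rw [Matrix.star_mul, Matrix.star_mul, star_star, ← Matrix.mul_assoc]
  have hA1B1 : A1 * B1 * star A1 * star B1 = E := by
    have h9 : A1 * B1 * star A1 * star B1
        = (μ * star μ * (ν * star ν)) • (A * B * star A * star B) := by
      simp only [hA1def, hB1def, star_smul, smul_mul_assoc, mul_smul_comm, smul_smul]
      congr 1
      ring
    rw [h9, hμ, hν, one_mul, one_smul, ← hABcomm]
  have hstarSU : ∀ (M : Matrix (Fin (m+1)) (Fin (m+1)) ℂ),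
      M ∈ Matrix.specialUnitaryGroup (Fin (m+1)) ℂ →
      star M ∈ Matrix.specialUnitaryGroup (Fin (m+1)) ℂ := by
    intro M hM
    rw [Matrix.mem_specialUnitaryGroup_iff] at hM ⊢
    refine ⟨Unitary.star_mem hM.1, ?_⟩
    rw [Matrix.star_eq_conjTranspose, Matrix.det_conjTranspose, hM.2, star_one]
  have haSU : V * A1 * star V ∈ Matrix.specialUnitaryGroup (Fin (m+1)) ℂ :=
    mul_mem (mul_mem hηSU hμSU) (hstarSU _ hηSU)
  have hbSU : V * B1 * star V ∈ Matrix.specialUnitaryGroup (Fin (m+1)) ℂ :=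
    mul_mem (mul_mem hηSU hνSU) (hstarSU _ hηSU)
  have hinv : ∀ M : Matrix (Fin (m+1)) (Fin (m+1)) ℂ,
      M ∈ Matrix.unitaryGroup (Fin (m+1)) ℂ → M⁻¹ = star M := by
    intro M hM
    exact Matrix.inv_eq_left_inv (Matrix.mem_unitaryGroup_iff'.mp hM)
  refine ⟨V * A1 * star V, V * B1 * star V, 1, 1, haSU, hbSU, one_mem _, one_mem _, ?_⟩
  have hcd : ((1 : Matrix (Fin (m+1)) (Fin (m+1)) ℂ) * 1 * 1⁻¹ * 1⁻¹) = 1 := by simp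
  rw [hcd, mul_one, hinv _ haSU.1, hinv _ hbSU.1, hstarconj, hstarconj,
    hconj, hconj, hconj, hA1B1]
  exact hTV
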